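/- Let C be a hermitian category. A sesquilinear form over C is hyperbolic if and only if it is isometric to a form of the shape (M ⊕ N, [[0,f],[g,0]]) where M, N are objects of C, f ∈ Hom_C(N, M*), g ∈ Hom_C(M, N*), and [[0,f],[g,0]] denotes the morphism M ⊕ N → M* ⊕ N* = (M ⊕ N)* given in matrix form. In particular, every form (M ⊕ N, [[0,f],[g,0]]) of this shape is a hyperbolic sesquilinear form. -/

import Mathlib

open CategoryTheory CategoryTheory.Limits

noncomputable section

universe v u

namespace HermCat

variable {C : Type u} [Category.{v} C] [Preadditive C]

/-- A hermitian structure on an additive category `C`: a contravariant additive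
functor `*` together with a natural transformation `ω : id → **` satisfying
`(ω_X)* ∘ ω_{X*} = id_{X*}`. -/
structure HermStructure (C : Type u) [Category.{v} C] [Preadditive C] where
  star : C → C
  starMap : ∀ {X Y : C}, (X ⟶ Y) → (star Y ⟶ star X)
  starMap_id : ∀ X : C, starMap (𝟙 X) = 𝟙 (star X)
  starMap_comp : ∀ {X Y Z : C} (f : X ⟶ Y) (g : Y ⟶ Z),
    starMap (f ≫ g) = starMap g ≫ starMap f
  starMap_add : ∀ {X Y : C} (f g : X ⟶ Y), starMap (f + g) = starMap f + starMap g
  omega : ∀ X : C, X ⟶ star (star X)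
  omega_natural : ∀ {X Y : C} (f : X ⟶ Y),
    f ≫ omega Y = omega X ≫ starMap (starMap f)
  omega_star : ∀ X : C, omega (star X) ≫ starMap (omega X) = 𝟙 (star X)

namespace HermStructure

variable (H : HermStructure C)

/-- The additive-monoid-hom incarnation of `starMap`. -/
def starHom (X Y : C) : (X ⟶ Y) →+ (H.star Y ⟶ H.star X) :=
  AddMonoidHom.mk' H.starMap (fun f g => H.starMap_add f g)

theorem starMap_zero (X Y : C) : H.starMap (0 : X ⟶ Y) = 0 :=
  (H.starHom X Y).map_zero

theorem starMap_neg {X Y : C} (f : X ⟶ Y) : H.starMap (-f) = -H.starMap f :=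
  (H.starHom X Y).map_neg f

theorem starMap_sub {X Y : C} (f g : X ⟶ Y) :
    H.starMap (f - g) = H.starMap f - H.starMap g :=
  (H.starHom X Y).map_sub f g

theorem starMap_nsmul {X Y : C} (n : ℕ) (f : X ⟶ Y) :
    H.starMap (n • f) = n • H.starMap f :=
  (H.starHom X Y).map_nsmul n f

theorem starMap_zsmul {X Y : C} (n : ℤ) (f : X ⟶ Y) :
    H.starMap (n • f) = n • H.starMap f :=
  (H.starHom X Y).map_zsmul n f

/-- An object is reflexive if `ω_X` is an isomorphism. -/
def Reflexive (X : C) : Prop := IsIso (H.omega X)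

/-- A sesquilinear form `s : M ⟶ M*` is unimodular if `s` and `s* ∘ ω_M` are
isomorphisms. -/
def IsUnimodular {M : C} (s : M ⟶ H.star M) : Prop :=
  IsIso s ∧ IsIso (H.omega M ≫ H.starMap s)

/-- A sesquilinear form `s : M ⟶ M*` is `ε`-hermitian if `s = ε • (s* ∘ ω_M)`. -/
def IsEpsHermitian (ε : ℤ) {M : C} (s : M ⟶ H.star M) : Prop :=
  s = ε • (H.omega M ≫ H.starMap s)

/-- `f` is an isometry from `(M, s)` to `(M', s')` if it is an isomorphism with
`s = f* ∘ s' ∘ f`. -/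
def IsIsometry {M M' : C} (s : M ⟶ H.star M) (s' : M' ⟶ H.star M')
    (f : M ⟶ M') : Prop :=
  IsIso f ∧ s = f ≫ s' ≫ H.starMap f

/-- Two sesquilinear forms are isometric if there is an isometry between them. -/
def Isometric {M M' : C} (s : M ⟶ H.star M) (s' : M' ⟶ H.star M') : Prop :=
  ∃ f : M ⟶ M', H.IsIsometry s s' f

section Biprod

variable [HasBinaryBiproducts C]

/-- The underlying object `Q ⊕ Q*` of the hyperbolic form. -/
def hypObj (Q : C) : C := Q ⊞ H.star Q

/-- The hyperbolic `ε`-hermitian form `H_ε(Q)` on `Q ⊕ Q*`, given in matrix form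
by `[[0, id_{Q*}], [ε·ω_Q, 0]]` (composed with the canonical identification
`Q* ⊕ Q** ≅ (Q ⊕ Q*)*`). -/
def hypForm (ε : ℤ) (Q : C) : H.hypObj Q ⟶ H.star (H.hypObj Q) :=
  biprod.lift (biprod.snd) (ε • (biprod.fst ≫ H.omega Q)) ≫
    biprod.desc (H.starMap biprod.fst) (H.starMap biprod.snd)

/-- A form is hyperbolic (as a unimodular `ε`-hermitian form) if it is isometric
to `(Q ⊕ Q*, H_ε(Q))` for some reflexive object `Q`. -/
def IsHyperbolic (ε : ℤ) {M : C} (s : M ⟶ H.star M) : Prop :=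
  ∃ Q : C, H.Reflexive Q ∧ H.Isometric s (H.hypForm ε Q)

/-- The orthogonal sum of two sesquilinear forms. -/
def orthSum {M M' : C} (s : M ⟶ H.star M) (s' : M' ⟶ H.star M') :
    M ⊞ M' ⟶ H.star (M ⊞ M') :=
  biprod.desc (s ≫ H.starMap biprod.fst) (s' ≫ H.starMap biprod.snd)

/-- The "split" form `[[0, f], [g, 0]]` on `M ⊕ N`, where `f : N ⟶ M*` and
`g : M ⟶ N*`. -/
def splitForm {M N : C} (f : N ⟶ H.star M) (g : M ⟶ H.star N) :
    M ⊞ N ⟶ H.star (M ⊞ N) :=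
  biprod.desc (g ≫ H.starMap biprod.snd) (f ≫ H.starMap biprod.fst)

end Biprod

end HermStructure

/-! ## The category of twisted double arrows -/

variable {ι : Type v}

/-- Objects of the category `TDA_I(C)` of twisted double `I`-arrows: quadruples
`(M, N, {f_i}, {g_i})` with `f_i, g_i : M ⟶ N^{*_i}`. -/
structure TDAObj (Hs : ι → HermStructure C) : Type (max u v) where
  M : C
  N : C
  f : ∀ i, M ⟶ (Hs i).star N
  g : ∀ i, M ⟶ (Hs i).star N

namespace TDAObj

variable {Hs : ι → HermStructure C}

/-- Morphisms `(M,N,{f_i},{g_i}) ⟶ (M',N',{f'_i},{g'_i})` in `TDA_I(C)`: pairs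
`(φ, ψ^op)` with `φ : M ⟶ M'`, `ψ : N' ⟶ N`, `f'_i ∘ φ = ψ^{*_i} ∘ f_i` and
`g'_i ∘ φ = ψ^{*_i} ∘ g_i`. -/
@[ext]
structure Hom (Z Z' : TDAObj Hs) : Type v where
  φ : Z.M ⟶ Z'.M
  ψ : Z'.N ⟶ Z.N
  condf : ∀ i, φ ≫ Z'.f i = Z.f i ≫ (Hs i).starMap ψ
  condg : ∀ i, φ ≫ Z'.g i = Z.g i ≫ (Hs i).starMap ψ

instance category : Category (TDAObj Hs) where
  Hom := Hom
  id Z := ⟨𝟙 Z.M, 𝟙 Z.N, fun i => by simp [(Hs i).starMap_id],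
    fun i => by simp [(Hs i).starMap_id]⟩
  comp {Z Z' Z''} u v := ⟨u.φ ≫ v.φ, v.ψ ≫ u.ψ,
    fun i => by
      rw [Category.assoc, v.condf i, ← Category.assoc, u.condf i, (Hs i).starMap_comp,
        Category.assoc],
    fun i => by
      rw [Category.assoc, v.condg i, ← Category.assoc, u.condg i, (Hs i).starMap_comp,
        Category.assoc]⟩
  id_comp u := by apply Hom.ext <;> simp
  comp_id u := by apply Hom.ext <;> simp
  assoc u v w := by apply Hom.ext <;> simp

@[simp] theorem id_φ (Z : TDAObj Hs) : Hom.φ (𝟙 Z) = 𝟙 Z.M := rfl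
@[simp] theorem id_ψ (Z : TDAObj Hs) : Hom.ψ (𝟙 Z) = 𝟙 Z.N := rfl
@[simp] theorem comp_φ {Z Z' Z'' : TDAObj Hs} (u : Z ⟶ Z') (v : Z' ⟶ Z'') :
    (u ≫ v).φ = u.φ ≫ v.φ := rfl
@[simp] theorem comp_ψ {Z Z' Z'' : TDAObj Hs} (u : Z ⟶ Z') (v : Z' ⟶ Z'') :
    (u ≫ v).ψ = v.ψ ≫ u.ψ := rfl

theorem hom_ext {Z Z' : TDAObj Hs} {u v : Z ⟶ Z'} (h1 : Hom.φ u = Hom.φ v)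
    (h2 : Hom.ψ u = Hom.ψ v) : u = v := Hom.ext h1 h2

instance homZero (Z Z' : TDAObj Hs) : Zero (Z ⟶ Z') :=
  ⟨⟨0, 0, fun i => by simp [(Hs i).starMap_zero], fun i => by simp [(Hs i).starMap_zero]⟩⟩

instance homAdd (Z Z' : TDAObj Hs) : Add (Z ⟶ Z') :=
  ⟨fun u v => ⟨u.φ + v.φ, u.ψ + v.ψ,
    fun i => by simp [Preadditive.add_comp, Preadditive.comp_add, (Hs i).starMap_add,
      u.condf i, v.condf i],
    fun i => by simp [Preadditive.add_comp, Preadditive.comp_add, (Hs i).starMap_add,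
      u.condg i, v.condg i]⟩⟩

instance homNeg (Z Z' : TDAObj Hs) : Neg (Z ⟶ Z') :=
  ⟨fun u => ⟨-u.φ, -u.ψ,
    fun i => by simp [Preadditive.neg_comp, Preadditive.comp_neg, (Hs i).starMap_neg,
      u.condf i],
    fun i => by simp [Preadditive.neg_comp, Preadditive.comp_neg, (Hs i).starMap_neg,
      u.condg i]⟩⟩

instance homSub (Z Z' : TDAObj Hs) : Sub (Z ⟶ Z') :=
  ⟨fun u v => ⟨u.φ - v.φ, u.ψ - v.ψ,
    fun i => by simp [Preadditive.sub_comp, Preadditive.comp_sub, (Hs i).starMap_sub,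
      u.condf i, v.condf i],
    fun i => by simp [Preadditive.sub_comp, Preadditive.comp_sub, (Hs i).starMap_sub,
      u.condg i, v.condg i]⟩⟩

instance homSMulNat (Z Z' : TDAObj Hs) : SMul ℕ (Z ⟶ Z') :=
  ⟨fun n u => ⟨n • u.φ, n • u.ψ,
    fun i => by simp [Preadditive.nsmul_comp, Preadditive.comp_nsmul, (Hs i).starMap_nsmul,
      u.condf i],
    fun i => by simp [Preadditive.nsmul_comp, Preadditive.comp_nsmul, (Hs i).starMap_nsmul,
      u.condg i]⟩⟩

instance homSMulInt (Z Z' : TDAObj Hs) : SMul ℤ (Z ⟶ Z') :=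
  ⟨fun n u => ⟨n • u.φ, n • u.ψ,
    fun i => by simp [Preadditive.zsmul_comp, Preadditive.comp_zsmul, (Hs i).starMap_zsmul,
      u.condf i],
    fun i => by simp [Preadditive.zsmul_comp, Preadditive.comp_zsmul, (Hs i).starMap_zsmul,
      u.condg i]⟩⟩

@[simp] theorem add_φ {Z Z' : TDAObj Hs} (u v : Z ⟶ Z') : (u + v).φ = u.φ + v.φ := rfl
@[simp] theorem add_ψ {Z Z' : TDAObj Hs} (u v : Z ⟶ Z') : (u + v).ψ = u.ψ + v.ψ := rfl
@[simp] theorem zero_φ {Z Z' : TDAObj Hs} : (0 : Z ⟶ Z').φ = 0 := rfl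
@[simp] theorem zero_ψ {Z Z' : TDAObj Hs} : (0 : Z ⟶ Z').ψ = 0 := rfl
@[simp] theorem neg_φ {Z Z' : TDAObj Hs} (u : Z ⟶ Z') : (-u).φ = -u.φ := rfl
@[simp] theorem neg_ψ {Z Z' : TDAObj Hs} (u : Z ⟶ Z') : (-u).ψ = -u.ψ := rfl

instance homAddCommGroup (Z Z' : TDAObj Hs) : AddCommGroup (Z ⟶ Z') :=
  Function.Injective.addCommGroup (fun u => (Hom.φ u, Hom.ψ u))
    (fun u v h => by
      apply hom_ext
      · exact congrArg Prod.fst h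
      · exact congrArg Prod.snd h)
    rfl (fun _ _ => rfl) (fun _ => rfl) (fun _ _ => rfl) (fun _ _ => rfl) (fun _ _ => rfl)

instance preadditive : Preadditive (TDAObj Hs) where
  add_comp Z Z' Z'' u u' v := by apply hom_ext <;> simp
  comp_add Z Z' Z'' u v v' := by apply hom_ext <;> simp

end TDAObj

/-- The hermitian structure on the category of twisted double `I`-arrows. -/
def tdaHerm (Hs : ι → HermStructure C) : HermStructure (TDAObj Hs) where
  star Z := ⟨Z.N, Z.M, fun i => (Hs i).omega Z.N ≫ (Hs i).starMap (Z.g i),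
    fun i => (Hs i).omega Z.N ≫ (Hs i).starMap (Z.f i)⟩
  starMap {Z Z'} u := ⟨u.ψ, u.φ,
    fun i => by
      rw [← Category.assoc, (Hs i).omega_natural u.ψ, Category.assoc, Category.assoc,
        ← (Hs i).starMap_comp, ← u.condg i, (Hs i).starMap_comp],
    fun i => by
      rw [← Category.assoc, (Hs i).omega_natural u.ψ, Category.assoc, Category.assoc,
        ← (Hs i).starMap_comp, ← u.condf i, (Hs i).starMap_comp]⟩
  starMap_id Z := by apply TDAObj.hom_ext <;> rfl
  starMap_comp u v := by apply TDAObj.hom_ext <;> rfl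
  starMap_add u v := by apply TDAObj.hom_ext <;> rfl
  omega Z := ⟨𝟙 Z.M, 𝟙 Z.N,
    fun i => by
      simp only [Category.id_comp, (Hs i).starMap_id, Category.comp_id]
      rw [(Hs i).starMap_comp, ← Category.assoc, ← (Hs i).omega_natural (Z.f i),
        Category.assoc, (Hs i).omega_star, Category.comp_id],
    fun i => by
      simp only [Category.id_comp, (Hs i).starMap_id, Category.comp_id]
      rw [(Hs i).starMap_comp, ← Category.assoc, ← (Hs i).omega_natural (Z.g i),
        Category.assoc, (Hs i).omega_star, Category.comp_id]⟩
  omega_natural u := by apply TDAObj.hom_ext <;> simp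
  omega_star Z := by apply TDAObj.hom_ext <;> simp

/-! ## Biproducts in `TDA_I(C)` -/

namespace TDAObj

variable {Hs : ι → HermStructure C} [HasBinaryBiproducts C]

/-- The biproduct of two objects of `TDA_I(C)`. -/
def biprodObj (Z W : TDAObj Hs) : TDAObj Hs where
  M := Z.M ⊞ W.M
  N := Z.N ⊞ W.N
  f i := biprod.desc (Z.f i ≫ (Hs i).starMap biprod.fst) (W.f i ≫ (Hs i).starMap biprod.snd)
  g i := biprod.desc (Z.g i ≫ (Hs i).starMap biprod.fst) (W.g i ≫ (Hs i).starMap biprod.snd)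

/-- The binary bicone exhibiting `biprodObj Z W` as a biproduct. -/
def biprodBicone (Z W : TDAObj Hs) : BinaryBicone Z W where
  pt := biprodObj Z W
  fst := ⟨biprod.fst, biprod.inl,
    fun i => by
      apply biprod.hom_ext' <;>
      simp [biprodObj, ← (Hs i).starMap_comp, (Hs i).starMap_zero, (Hs i).starMap_id],
    fun i => by
      apply biprod.hom_ext' <;>
      simp [biprodObj, ← (Hs i).starMap_comp, (Hs i).starMap_zero, (Hs i).starMap_id]⟩
  snd := ⟨biprod.snd, biprod.inr,
    fun i => by
      apply biprod.hom_ext' <;>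
      simp [biprodObj, ← (Hs i).starMap_comp, (Hs i).starMap_zero, (Hs i).starMap_id],
    fun i => by
      apply biprod.hom_ext' <;>
      simp [biprodObj, ← (Hs i).starMap_comp, (Hs i).starMap_zero, (Hs i).starMap_id]⟩
  inl := ⟨biprod.inl, biprod.fst,
    fun i => by simp [biprodObj],
    fun i => by simp [biprodObj]⟩
  inr := ⟨biprod.inr, biprod.snd,
    fun i => by simp [biprodObj],
    fun i => by simp [biprodObj]⟩
  inl_fst := by apply hom_ext <;> exact biprod.inl_fst
  inl_snd := by apply hom_ext <;> first | exact biprod.inl_snd | exact biprod.inr_fst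
  inr_fst := by apply hom_ext <;> first | exact biprod.inr_fst | exact biprod.inl_snd
  inr_snd := by apply hom_ext <;> exact biprod.inr_snd

instance hasBinaryBiproducts : HasBinaryBiproducts (TDAObj Hs) where
  has_binary_biproduct Z W :=
    hasBinaryBiproduct_of_total (biprodBicone Z W) (by apply hom_ext <;> exact biprod.total)

end TDAObj

/-! ## Isomorphisms in `TDA_I(C)` -/

namespace TDAObj

variable {Hs : ι → HermStructure C}

theorem isIso_of {Z Z' : TDAObj Hs} (u : Z ⟶ Z') (h1 : IsIso u.φ) (h2 : IsIso u.ψ) :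
    IsIso u := by
  refine ⟨⟨⟨inv u.φ, inv u.ψ, fun i => ?_, fun i => ?_⟩, ?_, ?_⟩⟩
  · have h := u.condf i
    have : Z'.f i = inv u.φ ≫ Z.f i ≫ (Hs i).starMap u.ψ := by
      rw [← h, IsIso.inv_hom_id_assoc]
    rw [this, Category.assoc, Category.assoc, ← (Hs i).starMap_comp,
      IsIso.inv_hom_id, (Hs i).starMap_id, Category.comp_id]
  · have h := u.condg i
    have : Z'.g i = inv u.φ ≫ Z.g i ≫ (Hs i).starMap u.ψ := by
      rw [← h, IsIso.inv_hom_id_assoc]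
    rw [this, Category.assoc, Category.assoc, ← (Hs i).starMap_comp,
      IsIso.inv_hom_id, (Hs i).starMap_id, Category.comp_id]
  · apply hom_ext <;> simp
  · apply hom_ext <;> simp

end TDAObj

/-! ## Categories of (systems of) sesquilinear forms -/

/-- Objects of the category `Sesq(C)` of sesquilinear forms over `(C, H)`. -/
structure FormObj (H : HermStructure C) : Type (max u v) where
  pt : C
  form : pt ⟶ H.star pt

namespace FormObj

variable {H : HermStructure C}

/-- `Sesq(C)`: morphisms are isometries. -/
instance category : Category (FormObj H) where
  Hom X Y := { f : X.pt ⟶ Y.pt // H.IsIsometry X.form Y.form f }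
  id X := ⟨𝟙 X.pt, inferInstance, by simp [H.starMap_id]⟩
  comp {X Y Z} u v := ⟨u.1 ≫ v.1, by
    obtain ⟨uf, hu1, hu2⟩ := u
    obtain ⟨vf, hv1, hv2⟩ := v
    haveI := hu1; haveI := hv1
    refine ⟨inferInstance, ?_⟩
    show X.form = (uf ≫ vf) ≫ Z.form ≫ H.starMap (uf ≫ vf)
    rw [hu2, hv2, H.starMap_comp]
    simp⟩
  id_comp u := by apply Subtype.ext; simp
  comp_id u := by apply Subtype.ext; simp
  assoc u v w := by apply Subtype.ext; simp

@[simp] theorem id_val (X : FormObj H) : (𝟙 X : X ⟶ X).1 = 𝟙 X.pt := rfl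
@[simp] theorem comp_val {X Y Z : FormObj H} (u : X ⟶ Y) (v : Y ⟶ Z) :
    (u ≫ v).1 = u.1 ≫ v.1 := rfl

end FormObj

/-- The predicate selecting unimodular `ε`-hermitian forms. -/
def hermPred (H : HermStructure C) (ε : ℤ) : FormObj H → Prop :=
  fun X => H.IsUnimodular X.form ∧ H.IsEpsHermitian ε X.form

/-- The category `Herm_ε(C)` of unimodular `ε`-hermitian forms over `(C, H)`. -/
abbrev HermFormCat (H : HermStructure C) (ε : ℤ) := ObjectProperty.FullSubcategory (hermPred H ε)

/-- Objects of the category of systems of sesquilinear forms over `(C, {(*_i, ω_i)})`. -/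
structure SysFormObj (Hs : ι → HermStructure C) : Type (max u v) where
  pt : C
  form : ∀ i, pt ⟶ (Hs i).star pt

namespace SysFormObj

variable {Hs : ι → HermStructure C}

/-- `f` is an isometry of systems of sesquilinear forms. -/
def IsIsometry (X Y : SysFormObj Hs) (f : X.pt ⟶ Y.pt) : Prop :=
  IsIso f ∧ ∀ i, X.form i = f ≫ Y.form i ≫ (Hs i).starMap f

/-- Two systems of sesquilinear forms are isometric. -/
def Isometric (X Y : SysFormObj Hs) : Prop := ∃ f, IsIsometry X Y f

/-- The category of systems of sesquilinear forms, with isometries as morphisms. -/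
instance category : Category (SysFormObj Hs) where
  Hom X Y := { f : X.pt ⟶ Y.pt // IsIsometry X Y f }
  id X := ⟨𝟙 X.pt, inferInstance, fun i => by simp [(Hs i).starMap_id]⟩
  comp {X Y Z} u v := ⟨u.1 ≫ v.1, by
    obtain ⟨uf, hu1, hu2⟩ := u
    obtain ⟨vf, hv1, hv2⟩ := v
    haveI := hu1; haveI := hv1
    refine ⟨inferInstance, fun i => ?_⟩
    show X.form i = (uf ≫ vf) ≫ Z.form i ≫ (Hs i).starMap (uf ≫ vf)
    rw [hu2 i, hv2 i, (Hs i).starMap_comp]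
    simp⟩
  id_comp u := by apply Subtype.ext; simp
  comp_id u := by apply Subtype.ext; simp
  assoc u v w := by apply Subtype.ext; simp

/-- The orthogonal sum of two systems of sesquilinear forms. -/
def orthSum [HasBinaryBiproducts C] (X Y : SysFormObj Hs) : SysFormObj Hs where
  pt := X.pt ⊞ Y.pt
  form i := biprod.desc (X.form i ≫ (Hs i).starMap biprod.fst)
    (Y.form i ≫ (Hs i).starMap biprod.snd)

end SysFormObj

/-! ## The functor `F` from (systems of) sesquilinear forms to hermitian forms over `TDA` -/

section FFunctor

variable {Hs : ι → HermStructure C}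

theorem HermStructure.omega_starMap_key (H : HermStructure C) {M : C}
    (s : M ⟶ H.star M) :
    H.omega M ≫ H.starMap (H.omega M ≫ H.starMap s) = s := by
  rw [H.starMap_comp, ← Category.assoc, ← H.omega_natural s, Category.assoc,
    H.omega_star, Category.comp_id]

/-- The twisted double arrow `Z(M, {s_i}) = (M, M, {s_i^* ∘ ω_M}, {s_i})` associated with a
system of sesquilinear forms. -/
def sysZ {M : C} (s : ∀ i, M ⟶ (Hs i).star M) : TDAObj Hs :=
  ⟨M, M, fun i => (Hs i).omega M ≫ (Hs i).starMap (s i), fun i => s i⟩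

/-- The canonical `1`-hermitian form `(id_M, id_M^op)` on `Z(M, {s_i})`. -/
def sysZForm {M : C} (s : ∀ i, M ⟶ (Hs i).star M) :
    sysZ s ⟶ (tdaHerm Hs).star (sysZ s) :=
  ⟨𝟙 M, 𝟙 M,
    fun i => by
      simp only [tdaHerm, sysZ, Category.id_comp, (Hs i).starMap_id, Category.comp_id],
    fun i => by
      simp only [tdaHerm, sysZ, Category.id_comp, (Hs i).starMap_id, Category.comp_id]
      rw [(Hs i).omega_starMap_key]⟩

theorem sysZForm_isIso {M : C} (s : ∀ i, M ⟶ (Hs i).star M) : IsIso (sysZForm s) :=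
  TDAObj.isIso_of (sysZForm s) (inferInstanceAs (IsIso (𝟙 M)))
    (inferInstanceAs (IsIso (𝟙 M)))

theorem sysZForm_unimodular {M : C} (s : ∀ i, M ⟶ (Hs i).star M) :
    (tdaHerm Hs).IsUnimodular (sysZForm s) := by
  constructor
  · exact sysZForm_isIso s
  · exact TDAObj.isIso_of _ (inferInstanceAs (IsIso (𝟙 M ≫ 𝟙 M)))
      (inferInstanceAs (IsIso (𝟙 M ≫ 𝟙 M)))

theorem sysZForm_hermitian {M : C} (s : ∀ i, M ⟶ (Hs i).star M) :
    (tdaHerm Hs).IsEpsHermitian 1 (sysZForm s) := by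
  unfold HermStructure.IsEpsHermitian
  rw [one_zsmul]
  apply TDAObj.hom_ext <;> exact (Category.comp_id _).symm

/-- The object part of the functor `F`. -/
def Fobj (X : SysFormObj Hs) : HermFormCat (tdaHerm Hs) 1 :=
  ⟨⟨sysZ X.form, sysZForm X.form⟩, ⟨sysZForm_unimodular X.form, sysZForm_hermitian X.form⟩⟩

/-- The map part of the functor `F`. -/
def Fmap {X Y : SysFormObj Hs} (u : X ⟶ Y) : Fobj X ⟶ Fobj Y := by
  haveI := u.2.1
  refine ⟨⟨⟨u.1, (inv (u.1 : X.pt ⟶ Y.pt) : Y.pt ⟶ X.pt), fun i => ?_, fun i => ?_⟩, ?_, ?_⟩⟩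
  · show u.1 ≫ (Hs i).omega Y.pt ≫ (Hs i).starMap (Y.form i) =
      ((Hs i).omega X.pt ≫ (Hs i).starMap (X.form i)) ≫ (Hs i).starMap (inv u.1)
    calc u.1 ≫ (Hs i).omega Y.pt ≫ (Hs i).starMap (Y.form i)
        = (Hs i).omega X.pt ≫ (Hs i).starMap ((Hs i).starMap u.1) ≫
            (Hs i).starMap (Y.form i) := by
          rw [← Category.assoc, (Hs i).omega_natural u.1, Category.assoc]
      _ = (Hs i).omega X.pt ≫ (Hs i).starMap (Y.form i ≫ (Hs i).starMap u.1) := by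
          rw [(Hs i).starMap_comp]
      _ = (Hs i).omega X.pt ≫ (Hs i).starMap (inv u.1 ≫ X.form i) := by
          rw [u.2.2 i, IsIso.inv_hom_id_assoc]
      _ = ((Hs i).omega X.pt ≫ (Hs i).starMap (X.form i)) ≫ (Hs i).starMap (inv u.1) := by
          rw [(Hs i).starMap_comp, Category.assoc]
  · show u.1 ≫ Y.form i = X.form i ≫ (Hs i).starMap (inv u.1)
    rw [u.2.2 i, Category.assoc, Category.assoc, ← (Hs i).starMap_comp,
      IsIso.inv_hom_id, (Hs i).starMap_id, Category.comp_id]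
  · exact TDAObj.isIso_of _ (by show IsIso u.1; infer_instance)
      (by show IsIso (inv u.1); infer_instance)
  · apply TDAObj.hom_ext
    · show 𝟙 X.pt = u.1 ≫ 𝟙 Y.pt ≫ inv u.1
      simp
    · show 𝟙 X.pt = (u.1 ≫ 𝟙 Y.pt) ≫ inv u.1
      simp

/-- The functor `F` from systems of sesquilinear forms over `(C, {(*_i, ω_i)})` to
unimodular `1`-hermitian forms over `TDA_I(C)`, given by
`F(M, {s_i}) = ((M, M, {s_i^{*_i} ∘ ω_{i,M}}, {s_i}), (id_M, id_M^op))` and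
`F(ψ) = (ψ, (ψ⁻¹)^op)`. -/
def Ffunctor (Hs : ι → HermStructure C) : SysFormObj Hs ⥤ HermFormCat (tdaHerm Hs) 1 where
  obj := Fobj
  map := Fmap
  map_id X := by
    haveI : IsIso ((𝟙 X : X ⟶ X).1) := (𝟙 X : X ⟶ X).2.1
    apply ObjectProperty.hom_ext; apply Subtype.ext; apply TDAObj.hom_ext
    · rfl
    · show inv ((𝟙 X : X ⟶ X).1) = 𝟙 X.pt
      change inv (𝟙 X.pt) = 𝟙 X.pt
      simp
  map_comp {X Y Z} u v := by
    haveI := u.2.1; haveI := v.2.1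
    haveI : IsIso ((u ≫ v).1) := (u ≫ v).2.1
    apply ObjectProperty.hom_ext; apply Subtype.ext; apply TDAObj.hom_ext
    · rfl
    · show inv ((u ≫ v).1) = inv v.1 ≫ inv u.1
      change inv (u.1 ≫ v.1) = inv v.1 ≫ inv u.1
      simp

end FFunctor

end HermCat

namespace HermCat

variable {C : Type u} [Category.{v} C] [Preadditive C]

/-- A sesquilinear form `(M, s)` over `(C, H)` is hyperbolic if its image
`F(M, s) = (Z(M,s), (id, id^op))` under the equivalence `F` is a hyperbolic unimodular
`1`-hermitian form over `TDA(C)`. -/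
def IsHypSesq (H : HermStructure C) [HasBinaryBiproducts C] {M : C}
    (s : M ⟶ H.star M) : Prop :=
  (tdaHerm (fun _ : PUnit.{v + 1} => H)).IsHyperbolic 1
    (sysZForm (fun _ : PUnit.{v + 1} => s))

end HermCat

namespace HermCat

section GeneralHelpers

variable {D : Type u} [Category.{v} D] [Preadditive D]

theorem HermStructure.isometric_symm (H : HermStructure D) {X Y : D}
    {a : X ⟶ H.star X} {b : Y ⟶ H.star Y} (h : H.Isometric a b) : H.Isometric b a := by
  obtain ⟨u, hu, heq⟩ := h
  haveI := hu
  have hst : H.starMap u ≫ H.starMap (inv u) = 𝟙 _ := by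
    rw [← H.starMap_comp, IsIso.inv_hom_id, H.starMap_id]
  refine ⟨inv u, inferInstance, ?_⟩
  rw [heq]
  simp [hst]

theorem HermStructure.isometric_trans (H : HermStructure D) {X Y Z : D}
    {a : X ⟶ H.star X} {b : Y ⟶ H.star Y} {c : Z ⟶ H.star Z}
    (h1 : H.Isometric a b) (h2 : H.Isometric b c) : H.Isometric a c := by
  obtain ⟨u, hu, hequ⟩ := h1
  obtain ⟨v, hv, heqv⟩ := h2
  haveI := hu; haveI := hv
  refine ⟨u ≫ v, inferInstance, ?_⟩
  rw [hequ, heqv, H.starMap_comp]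
  simp

theorem HermStructure.isometric_conj (H : HermStructure D) {X Y : D} (e : X ⟶ Y)
    (he : IsIso e) (b : Y ⟶ H.star Y) : H.Isometric (e ≫ b ≫ H.starMap e) b :=
  ⟨e, he, rfl⟩

theorem HermStructure.omega_double (H : HermStructure D) {X Y : D} (f : X ⟶ H.star Y) :
    H.omega X ≫ H.starMap (H.omega Y ≫ H.starMap f) = f := by
  rw [H.starMap_comp, ← Category.assoc, ← H.omega_natural f, Category.assoc,
    H.omega_star, Category.comp_id]

theorem HermStructure.omega_conj (H : HermStructure D) {X V W' : D} (ι' : X ⟶ V)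
    (b : V ⟶ H.star V) (w : W' ⟶ V) :
    ι' ≫ (H.omega V ≫ H.starMap b) ≫ H.starMap w =
      H.omega X ≫ H.starMap (w ≫ b ≫ H.starMap ι') := by
  rw [H.starMap_comp w, H.starMap_comp b]
  simp only [Category.assoc]
  rw [← Category.assoc ι', H.omega_natural ι']
  simp only [Category.assoc]

section Swap

variable [HasBinaryBiproducts D]

/-- The swap isomorphism `X ⊞ Y ⟶ Y ⊞ X`. -/
def swapP (X Y : D) : X ⊞ Y ⟶ Y ⊞ X := biprod.lift biprod.snd biprod.fst

@[simp] theorem swapP_fst (X Y : D) : swapP X Y ≫ biprod.fst = biprod.snd :=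
  biprod.lift_fst _ _

@[simp] theorem swapP_snd (X Y : D) : swapP X Y ≫ biprod.snd = biprod.fst :=
  biprod.lift_snd _ _

@[simp] theorem swapP_swapP (X Y : D) : swapP X Y ≫ swapP Y X = 𝟙 _ := by
  apply biprod.hom_ext <;> simp [swapP]

theorem swapP_isIso (X Y : D) : IsIso (swapP X Y) :=
  ⟨swapP Y X, swapP_swapP X Y, swapP_swapP Y X⟩

end Swap

end GeneralHelpers

section TDAHelpers

variable {C : Type u} [Category.{v} C] [Preadditive C] {ι : Type v}
  {Hs : ι → HermStructure C}

@[simp] theorem tdaHerm_starMap_φ {Z Z' : TDAObj Hs} (u : Z ⟶ Z') :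
    ((tdaHerm Hs).starMap u).φ = u.ψ := rfl

@[simp] theorem tdaHerm_starMap_ψ {Z Z' : TDAObj Hs} (u : Z ⟶ Z') :
    ((tdaHerm Hs).starMap u).ψ = u.φ := rfl

@[simp] theorem tdaHerm_omega_φ (Z : TDAObj Hs) :
    ((tdaHerm Hs).omega Z).φ = 𝟙 Z.M := rfl

@[simp] theorem tdaHerm_omega_ψ (Z : TDAObj Hs) :
    ((tdaHerm Hs).omega Z).ψ = 𝟙 Z.N := rfl

@[simp] theorem tdaHerm_star_f (Z : TDAObj Hs) (i : ι) :
    ((tdaHerm Hs).star Z).f i = (Hs i).omega Z.N ≫ (Hs i).starMap (Z.g i) := rfl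

@[simp] theorem tdaHerm_star_g (Z : TDAObj Hs) (i : ι) :
    ((tdaHerm Hs).star Z).g i = (Hs i).omega Z.N ≫ (Hs i).starMap (Z.f i) := rfl

@[simp] theorem sysZForm_φ {M : C} (s : ∀ i, M ⟶ (Hs i).star M) :
    (sysZForm s).φ = 𝟙 M := rfl

@[simp] theorem sysZForm_ψ {M : C} (s : ∀ i, M ⟶ (Hs i).star M) :
    (sysZForm s).ψ = 𝟙 M := rfl

theorem tda_isIso_parts {Z Z' : TDAObj Hs} (u : Z ⟶ Z') [IsIso u] :
    IsIso u.φ ∧ IsIso u.ψ := by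
  constructor
  · refine ⟨(inv u).φ, ?_, ?_⟩
    · rw [← TDAObj.comp_φ, IsIso.hom_inv_id]; rfl
    · rw [← TDAObj.comp_φ, IsIso.inv_hom_id]; rfl
  · refine ⟨(inv u).ψ, ?_, ?_⟩
    · rw [← TDAObj.comp_ψ, IsIso.inv_hom_id]; rfl
    · rw [← TDAObj.comp_ψ, IsIso.hom_inv_id]; rfl

theorem tda_reflexive (Z : TDAObj Hs) : (tdaHerm Hs).Reflexive Z :=
  TDAObj.isIso_of _ (inferInstanceAs (IsIso (𝟙 Z.M))) (inferInstanceAs (IsIso (𝟙 Z.N)))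

variable [HasBinaryBiproducts C]

/-- The canonical isomorphism `biprodObj Z W ⟶ Z ⊞ W`. -/
def tdaBiprodIso (Z W : TDAObj Hs) : TDAObj.biprodObj Z W ⟶ Z ⊞ W :=
  biprod.lift (TDAObj.biprodBicone Z W).fst (TDAObj.biprodBicone Z W).snd

/-- The inverse of `tdaBiprodIso`. -/
def tdaBiprodInv (Z W : TDAObj Hs) : Z ⊞ W ⟶ TDAObj.biprodObj Z W :=
  biprod.desc (TDAObj.biprodBicone Z W).inl (TDAObj.biprodBicone Z W).inr

theorem tdaBiprodIso_hom_inv (Z W : TDAObj Hs) :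
    tdaBiprodIso Z W ≫ tdaBiprodInv Z W = 𝟙 _ := by
  rw [tdaBiprodIso, tdaBiprodInv]; refine biprod.lift_desc.trans ?_
  apply TDAObj.hom_ext <;>
    exact biprod.total

theorem tdaBiprodIso_inv_hom (Z W : TDAObj Hs) :
    tdaBiprodInv Z W ≫ tdaBiprodIso Z W = 𝟙 _ := by
  have e1 : (biprod.inl : Z ⟶ Z ⊞ W) ≫ tdaBiprodInv Z W = (TDAObj.biprodBicone Z W).inl :=
    biprod.inl_desc _ _
  have e2 : (biprod.inr : W ⟶ Z ⊞ W) ≫ tdaBiprodInv Z W = (TDAObj.biprodBicone Z W).inr :=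
    biprod.inr_desc _ _
  have e3 : tdaBiprodIso Z W ≫ biprod.fst = (TDAObj.biprodBicone Z W).fst := biprod.lift_fst _ _
  have e4 : tdaBiprodIso Z W ≫ biprod.snd = (TDAObj.biprodBicone Z W).snd := biprod.lift_snd _ _
  rw [tdaBiprodIso, tdaBiprodInv]
  apply biprod.hom_ext' <;> apply biprod.hom_ext <;>
    simp only [Category.assoc, Category.id_comp]
  · erw [biprod.inl_desc_assoc, biprod.lift_fst]
    exact (TDAObj.biprodBicone Z W).inl_fst.trans biprod.inl_fst.symm
  · erw [biprod.inl_desc_assoc, biprod.lift_snd]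
    exact (TDAObj.biprodBicone Z W).inl_snd.trans biprod.inl_snd.symm
  · erw [biprod.inr_desc_assoc, biprod.lift_fst]
    exact (TDAObj.biprodBicone Z W).inr_fst.trans biprod.inr_fst.symm
  · erw [biprod.inr_desc_assoc, biprod.lift_snd]
    exact (TDAObj.biprodBicone Z W).inr_snd.trans biprod.inr_snd.symm

theorem tdaBiprodIso_isIso (Z W : TDAObj Hs) : IsIso (tdaBiprodIso Z W) :=
  ⟨tdaBiprodInv Z W, tdaBiprodIso_hom_inv Z W, tdaBiprodIso_inv_hom Z W⟩

/-- The hyperbolic form transported to `biprodObj Q (star Q)`. -/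
def tdaHypT (Q : TDAObj Hs) :
    TDAObj.biprodObj Q ((tdaHerm Hs).star Q) ⟶
      (tdaHerm Hs).star (TDAObj.biprodObj Q ((tdaHerm Hs).star Q)) :=
  tdaBiprodIso Q ((tdaHerm Hs).star Q) ≫ (tdaHerm Hs).hypForm 1 Q ≫
    (tdaHerm Hs).starMap (tdaBiprodIso Q ((tdaHerm Hs).star Q))

theorem isometric_tdaHypT (Q : TDAObj Hs) :
    (tdaHerm Hs).Isometric (tdaHypT Q) ((tdaHerm Hs).hypForm 1 Q) :=
  (tdaHerm Hs).isometric_conj _ (tdaBiprodIso_isIso _ _) _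

theorem tdaHypT_eq (Q : TDAObj Hs) :
    tdaHypT Q =
      (TDAObj.biprodBicone Q ((tdaHerm Hs).star Q)).snd ≫
          (tdaHerm Hs).starMap (TDAObj.biprodBicone Q ((tdaHerm Hs).star Q)).fst +
        (TDAObj.biprodBicone Q ((tdaHerm Hs).star Q)).fst ≫ (tdaHerm Hs).omega Q ≫
          (tdaHerm Hs).starMap (TDAObj.biprodBicone Q ((tdaHerm Hs).star Q)).snd := by
  have h1 : tdaBiprodIso Q ((tdaHerm Hs).star Q) ≫ biprod.snd =
      (TDAObj.biprodBicone Q ((tdaHerm Hs).star Q)).snd := biprod.lift_snd _ _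
  have h2 : tdaBiprodIso Q ((tdaHerm Hs).star Q) ≫ biprod.fst =
      (TDAObj.biprodBicone Q ((tdaHerm Hs).star Q)).fst := biprod.lift_fst _ _
  have h3 : (tdaHerm Hs).starMap biprod.fst ≫
      (tdaHerm Hs).starMap (tdaBiprodIso Q ((tdaHerm Hs).star Q)) =
      (tdaHerm Hs).starMap (TDAObj.biprodBicone Q ((tdaHerm Hs).star Q)).fst := by
    rw [← (tdaHerm Hs).starMap_comp, h2]; rfl
  have h4 : (tdaHerm Hs).starMap biprod.snd ≫
      (tdaHerm Hs).starMap (tdaBiprodIso Q ((tdaHerm Hs).star Q)) =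
      (tdaHerm Hs).starMap (TDAObj.biprodBicone Q ((tdaHerm Hs).star Q)).snd := by
    rw [← (tdaHerm Hs).starMap_comp, h1]; rfl
  rw [tdaHypT, HermStructure.hypForm, one_zsmul]; erw [biprod.lift_desc]; erw [
    Preadditive.add_comp, Preadditive.comp_add]
  congr 1
  · erw [Category.assoc]
    erw [h3, ← Category.assoc, h1]; rfl
  · erw [Category.assoc, Category.assoc]
    erw [h4, ← Category.assoc, h2]; rfl

theorem tdaHypT_φ (Q : TDAObj Hs) : (tdaHypT Q).φ = swapP Q.M Q.N := by
  rw [tdaHypT_eq]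
  show (biprod.snd : Q.M ⊞ Q.N ⟶ Q.N) ≫ (biprod.inl : Q.N ⟶ Q.N ⊞ Q.M) +
      (biprod.fst : Q.M ⊞ Q.N ⟶ Q.M) ≫ 𝟙 Q.M ≫ (biprod.inr : Q.M ⟶ Q.N ⊞ Q.M) =
    swapP Q.M Q.N
  apply biprod.hom_ext <;> simp [swapP]

theorem tdaHypT_ψ (Q : TDAObj Hs) : (tdaHypT Q).ψ = swapP Q.M Q.N := by
  rw [tdaHypT_eq]
  show (biprod.fst : Q.M ⊞ Q.N ⟶ Q.M) ≫ (biprod.inr : Q.M ⟶ Q.N ⊞ Q.M) +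
      ((biprod.snd : Q.M ⊞ Q.N ⟶ Q.N) ≫ 𝟙 Q.N) ≫ (biprod.inl : Q.N ⟶ Q.N ⊞ Q.M) =
    swapP Q.M Q.N
  apply biprod.hom_ext <;> simp [swapP]

end TDAHelpers

section Main

variable {C : Type u} [Category.{v} C] [Preadditive C]

theorem isometric_sysZForm (H : HermStructure C) {V V' : C} {s : V ⟶ H.star V}
    {s' : V' ⟶ H.star V'} (h : H.Isometric s s') :
    (tdaHerm fun _ : PUnit.{v + 1} => H).Isometric
      (sysZForm fun _ : PUnit.{v + 1} => s) (sysZForm fun _ : PUnit.{v + 1} => s') := by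
  obtain ⟨e, he⟩ := h
  let X : SysFormObj (fun _ : PUnit.{v + 1} => H) := ⟨V, fun _ => s⟩
  let Y : SysFormObj (fun _ : PUnit.{v + 1} => H) := ⟨V', fun _ => s'⟩
  let u : X ⟶ Y := ⟨e, he.1, fun _ => he.2⟩
  exact ⟨(Fmap u).hom.1, (Fmap u).hom.2⟩

theorem isHypSesq_of_isometric (H : HermStructure C) [HasBinaryBiproducts C]
    {V V' : C} {s : V ⟶ H.star V} {s' : V' ⟶ H.star V'}
    (h : H.Isometric s s') (h' : IsHypSesq H s') : IsHypSesq H s := by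
  obtain ⟨Q, hQ, hiso⟩ := h'
  exact ⟨Q, hQ, (tdaHerm _).isometric_trans (isometric_sysZForm H h) hiso⟩

theorem exists_split_of_isHypSesq (H : HermStructure C) [HasBinaryBiproducts C]
    {V : C} (s : V ⟶ H.star V) (h : IsHypSesq H s) :
    ∃ (M N : C) (f : N ⟶ H.star M) (g : M ⟶ H.star N),
      H.Isometric s (H.splitForm f g) := by
  obtain ⟨Q, -, hiso⟩ := h
  have h2 : (tdaHerm fun _ : PUnit.{v + 1} => H).Isometric
      (sysZForm fun _ : PUnit.{v + 1} => s) (tdaHypT Q) :=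
    (tdaHerm _).isometric_trans hiso ((tdaHerm _).isometric_symm (isometric_tdaHypT Q))
  obtain ⟨u, hu, hequ⟩ := h2
  haveI := hu
  obtain ⟨huφ, huψ⟩ := tda_isIso_parts u
  -- the φ-component of the isometry equation
  have hφ : 𝟙 V = u.φ ≫ swapP Q.M Q.N ≫ u.ψ := by
    have := congrArg TDAObj.Hom.φ hequ
    simp [tdaHypT_φ] at this; exact this
  have h5 : (u.φ ≫ swapP Q.M Q.N) ≫ u.ψ = 𝟙 V := by
    exact (Category.assoc _ _ _).trans hφ.symm
  have hinv : H.starMap u.ψ ≫ H.starMap (u.φ ≫ swapP Q.M Q.N) = 𝟙 (H.star V) := by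
    rw [← H.starMap_comp]; erw [h5]
    exact H.starMap_id V
  have hg : u.φ ≫ (TDAObj.biprodObj Q ((tdaHerm _).star Q)).g PUnit.unit =
      s ≫ H.starMap u.ψ := u.condg PUnit.unit
  set ff : Q.N ⟶ H.star Q.M := H.omega Q.N ≫ H.starMap (Q.f PUnit.unit) with hff
  set gg : Q.M ⟶ H.star Q.N := Q.g PUnit.unit with hgg
  have hb : (TDAObj.biprodObj Q ((tdaHerm _).star Q)).g PUnit.unit ≫
      H.starMap (swapP Q.M Q.N) = H.splitForm ff gg := by
    show biprod.desc (gg ≫ H.starMap (biprod.fst : Q.N ⊞ Q.M ⟶ Q.N))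
        (ff ≫ H.starMap (biprod.snd : Q.N ⊞ Q.M ⟶ Q.M)) ≫ H.starMap (swapP Q.M Q.N) =
      H.splitForm ff gg
    rw [HermStructure.splitForm]
    apply biprod.hom_ext' <;> simp [← H.starMap_comp]
  refine ⟨Q.M, Q.N, ff, gg, u.φ, huφ, ?_⟩
  calc s = s ≫ 𝟙 _ := by rw [Category.comp_id]
    _ = (s ≫ H.starMap u.ψ ≫ H.starMap (u.φ ≫ swapP Q.M Q.N) : V ⟶ H.star V) := by erw [hinv] <;> rfl
    _ = ((u.φ ≫ (TDAObj.biprodObj Q ((tdaHerm _).star Q)).g PUnit.unit) ≫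
          H.starMap (u.φ ≫ swapP Q.M Q.N) : V ⟶ H.star V) := by rw [← Category.assoc, ← hg] <;> rfl
    _ = (u.φ ≫ ((TDAObj.biprodObj Q ((tdaHerm _).star Q)).g PUnit.unit ≫
          H.starMap (swapP Q.M Q.N)) ≫ H.starMap u.φ : V ⟶ H.star V) := by
        erw [H.starMap_comp, Category.assoc, Category.assoc] <;> rfl
    _ = (u.φ ≫ H.splitForm ff gg ≫ H.starMap u.φ : V ⟶ H.star V) := by rw [hb] <;> rfl

theorem isHypSesq_splitForm (H : HermStructure C) [HasBinaryBiproducts C]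
    (M N : C) (f : N ⟶ H.star M) (g : M ⟶ H.star N) :
    IsHypSesq H (H.splitForm f g) := by
  refine ⟨⟨M, N, fun _ => H.omega M ≫ H.starMap f, fun _ => g⟩, tda_reflexive _, ?_⟩
  set Q : TDAObj (fun _ : PUnit.{v + 1} => H) :=
    ⟨M, N, fun _ => H.omega M ≫ H.starMap f, fun _ => g⟩ with hQdef
  refine (tdaHerm _).isometric_trans ?_ (isometric_tdaHypT Q)
  -- auxiliary computations
  have hsp1 : H.splitForm f g ≫ H.starMap biprod.inl = biprod.snd ≫ f := by
    apply biprod.hom_ext' <;>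
      simp [HermStructure.splitForm, ← H.starMap_comp, H.starMap_zero, H.starMap_id]
  have hsp2 : H.splitForm f g ≫ H.starMap biprod.inr = biprod.fst ≫ g := by
    apply biprod.hom_ext' <;>
      simp [HermStructure.splitForm, ← H.starMap_comp, H.starMap_zero, H.starMap_id]
  have hr1 : swapP N M ≫ H.splitForm f g ≫ H.starMap biprod.inl =
      biprod.fst ≫ f := by
    rw [hsp1, ← Category.assoc, swapP_snd]
  have hr2 : swapP N M ≫ H.splitForm f g ≫ H.starMap biprod.inr =
      biprod.snd ≫ g := by
    rw [hsp2, ← Category.assoc, swapP_fst]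
  refine ⟨⟨𝟙 (M ⊞ N), swapP N M, fun i => ?_, fun i => ?_⟩, ?_, ?_⟩
  · -- condf
    show 𝟙 (M ⊞ N) ≫ biprod.desc
        ((H.omega M ≫ H.starMap f) ≫ H.starMap (biprod.fst : N ⊞ M ⟶ N))
        ((H.omega N ≫ H.starMap g) ≫ H.starMap (biprod.snd : N ⊞ M ⟶ M)) =
      (H.omega (M ⊞ N) ≫ H.starMap (H.splitForm f g)) ≫ H.starMap (swapP N M)
    rw [Category.id_comp]
    apply biprod.hom_ext'
    · rw [biprod.inl_desc, H.omega_conj biprod.inl (H.splitForm f g) (swapP N M),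
        hr1, H.starMap_comp, Category.assoc]
    · rw [biprod.inr_desc, H.omega_conj biprod.inr (H.splitForm f g) (swapP N M),
        hr2, H.starMap_comp, Category.assoc]
  · -- condg
    show 𝟙 (M ⊞ N) ≫ biprod.desc (g ≫ H.starMap (biprod.fst : N ⊞ M ⟶ N))
        ((H.omega N ≫ H.starMap (H.omega M ≫ H.starMap f)) ≫
          H.starMap (biprod.snd : N ⊞ M ⟶ M)) =
      H.splitForm f g ≫ H.starMap (swapP N M)
    rw [Category.id_comp, H.omega_double f, HermStructure.splitForm]
    apply biprod.hom_ext' <;> simp [← H.starMap_comp]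
  · -- IsIso
    exact TDAObj.isIso_of _ (inferInstanceAs (IsIso (𝟙 (M ⊞ N)))) (swapP_isIso N M)
  · -- the isometry equation
    apply TDAObj.hom_ext
    · simp only [TDAObj.comp_φ, tdaHerm_starMap_φ, sysZForm_φ, tdaHypT_φ,
        swapP_swapP, Category.assoc]
      erw [Category.id_comp, swapP_swapP]
    · simp only [TDAObj.comp_ψ, tdaHerm_starMap_ψ, sysZForm_ψ, tdaHypT_ψ,
        swapP_swapP, Category.assoc]
      erw [Category.id_comp, swapP_swapP]

end Main

/-- Up to isometry, the hyperbolic sesquilinear forms over a hermitian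
category `C` are exactly the forms `(M ⊕ N, [[0, f], [g, 0]])` with `f : N ⟶ M*`,
`g : M ⟶ N*`; in particular every form of this shape is hyperbolic. -/
theorem isHypSesq_iff_splitForm {C : Type u} [Category.{v} C] [Preadditive C]
    (H : HermStructure C) [HasBinaryBiproducts C] {V : C} (s : V ⟶ H.star V) :
    (IsHypSesq H s ↔ ∃ (M N : C) (f : N ⟶ H.star M) (g : M ⟶ H.star N),
      H.Isometric s (H.splitForm f g)) ∧
    (∀ (M N : C) (f : N ⟶ H.star M) (g : M ⟶ H.star N),
      IsHypSesq H (H.splitForm f g)) := by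
  constructor
  · constructor
    · exact fun h => exists_split_of_isHypSesq H s h
    · rintro ⟨M, N, f, g, hiso⟩
      exact isHypSesq_of_isometric H hiso (isHypSesq_splitForm H M N f g)
  · exact fun M N f g => isHypSesq_splitForm H M N f g

end HermCat
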